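/- arXiv:2512.05640 — 3 statements merged into one kernel-verified Lean document; each statement's English description precedes it below -/
import Mathlib

section
/- Let X, Y be real normed linear spaces and E a dual Banach space (E = F* for a Banach space F). Then there exists a norm-one linear projection P from BLip₀(X,Y;E) onto Blin(X,Y;E), i.e. a bounded linear map P with ‖P‖ ≤ 1, P(T) bilinear for every T, and P(S) = S for every bounded bilinear S. In particular Blin(X,Y;E) is complemented in BLip₀(X,Y;E). -/
/-- `T` is two-Lipschitz with constant `k`. -/
def TwoLipWith {X Y E : Type*} [NormedAddCommGroup X] [NormedAddCommGroup Y]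
    [NormedAddCommGroup E] (k : ℝ) (T : X → Y → E) : Prop :=
  ∀ (x x' : X) (y y' : Y),
    ‖T x y - T x' y - T x y' + T x' y'‖ ≤ k * ‖x - x'‖ * ‖y - y'‖

/-- Membership in `BLip₀(X,Y;E)`. -/
def MemBLip0 {X Y E : Type*} [NormedAddCommGroup X] [NormedAddCommGroup Y]
    [NormedAddCommGroup E] (T : X → Y → E) : Prop :=
  (∃ k : ℝ, 0 ≤ k ∧ TwoLipWith k T) ∧ (∀ x : X, T x 0 = 0) ∧ (∀ y : Y, T 0 y = 0)

/-- `T` is bilinear (linear in each variable separately). -/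
def IsBilin {X Y E : Type*} [NormedAddCommGroup X] [NormedSpace ℝ X]
    [NormedAddCommGroup Y] [NormedSpace ℝ Y] [NormedAddCommGroup E] [NormedSpace ℝ E]
    (T : X → Y → E) : Prop :=
  (∀ (x x' : X) (y : Y), T (x + x') y = T x y + T x' y) ∧
  (∀ (c : ℝ) (x : X) (y : Y), T (c • x) y = c • T x y) ∧
  (∀ (x : X) (y y' : Y), T x (y + y') = T x y + T x y') ∧
  (∀ (c : ℝ) (x : X) (y : Y), T x (c • y) = c • T x y)


open Finset Pointwise
namespace Stmt9Aux
variable {G : Type*} [AddCommGroup G]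

def meanSet (f : G → ℝ) : Set ℝ :=
  {c | ∃ n : ℕ, 0 < n ∧ ∃ v : Fin n → G, ∀ x : G, ∑ i, f (x + v i) ≤ c * n}

def Bdd (f : G → ℝ) : Prop := ∃ C : ℝ, ∀ x, |f x| ≤ C

lemma mem_meanSet_of_le {f : G → ℝ} {C : ℝ} (h : ∀ x, f x ≤ C) : C ∈ meanSet f := by
  refine ⟨1, one_pos, fun _ => 0, fun x => ?_⟩
  simpa using h (x + 0)

lemma le_of_mem_meanSet {f : G → ℝ} {C : ℝ} (h : ∀ x, -C ≤ f x) {c : ℝ}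
    (hc : c ∈ meanSet f) : -C ≤ c := by
  obtain ⟨n, hn, v, hv⟩ := hc
  have h1 : (-C) * n ≤ c * n := by
    refine le_trans ?_ (hv 0)
    calc (-C) * n = ∑ _i : Fin n, (-C) := by simp [mul_comm]
    _ ≤ ∑ i, f (0 + v i) := Finset.sum_le_sum fun i _ => h _
  have hn' : (0 : ℝ) < n := by exact_mod_cast hn
  exact le_of_mul_le_mul_right h1 hn'

lemma bddBelow_meanSet {f : G → ℝ} (h : Bdd f) : BddBelow (meanSet f) := by
  obtain ⟨C, hC⟩ := h
  exact ⟨-C, fun c hc => le_of_mem_meanSet (fun x => neg_le_of_abs_le (hC x)) hc⟩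

lemma meanSet_nonempty {f : G → ℝ} (h : Bdd f) : (meanSet f).Nonempty := by
  obtain ⟨C, hC⟩ := h
  exact ⟨C, mem_meanSet_of_le fun x => le_of_abs_le (hC x)⟩

noncomputable def pfun (f : G → ℝ) : ℝ := sInf (meanSet f)

lemma pfun_le {f : G → ℝ} (hb : Bdd f) {C : ℝ} (h : ∀ x, f x ≤ C) : pfun f ≤ C :=
  csInf_le (bddBelow_meanSet hb) (mem_meanSet_of_le h)

lemma pfun_nonneg_of {f : G → ℝ} (h : ∀ x, 0 ≤ f x) (hb : Bdd f) : 0 ≤ pfun f := by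
  refine le_csInf (meanSet_nonempty hb) fun c hc => ?_
  have := le_of_mem_meanSet (C := 0) (fun x => by simpa using h x) hc
  simpa using this

lemma add_mem_meanSet {f g : G → ℝ} {c d : ℝ} (hc : c ∈ meanSet f) (hd : d ∈ meanSet g) :
    c + d ∈ meanSet (f + g) := by
  obtain ⟨n, hn, v, hv⟩ := hc
  obtain ⟨m, hm, w, hw⟩ := hd
  refine ⟨n * m, Nat.mul_pos hn hm,
    fun i => (fun p : Fin n × Fin m => v p.1 + w p.2) (finProdFinEquiv.symm i), fun x => ?_⟩
  have key : ∑ i : Fin (n * m),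
      (f + g) (x + (fun p : Fin n × Fin m => v p.1 + w p.2) (finProdFinEquiv.symm i))
      = ∑ p : Fin n × Fin m, (f + g) (x + (v p.1 + w p.2)) := by
    rw [← Equiv.sum_comp finProdFinEquiv
      (fun i => (f + g) (x + (fun p : Fin n × Fin m => v p.1 + w p.2) (finProdFinEquiv.symm i)))]
    simp
  rw [key]
  have splitfg : ∑ p : Fin n × Fin m, (f + g) (x + (v p.1 + w p.2))
      = (∑ p : Fin n × Fin m, f (x + (v p.1 + w p.2)))
        + ∑ p : Fin n × Fin m, g (x + (v p.1 + w p.2)) := by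
    rw [← Finset.sum_add_distrib]; rfl
  rw [splitfg]
  have hf : ∑ p : Fin n × Fin m, f (x + (v p.1 + w p.2)) ≤ c * n * m := by
    rw [Fintype.sum_prod_type, Finset.sum_comm]
    calc ∑ j : Fin m, ∑ i : Fin n, f (x + (v i + w j))
        = ∑ j : Fin m, ∑ i : Fin n, f ((x + w j) + v i) := by
          congr 1; funext j; congr 1; funext i; congr 1; abel
      _ ≤ ∑ _j : Fin m, c * n := Finset.sum_le_sum fun j _ => hv (x + w j)
      _ = c * n * m := by simp [mul_comm]
  have hg : ∑ p : Fin n × Fin m, g (x + (v p.1 + w p.2)) ≤ d * m * n := by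
    rw [Fintype.sum_prod_type]
    calc ∑ i : Fin n, ∑ j : Fin m, g (x + (v i + w j))
        = ∑ i : Fin n, ∑ j : Fin m, g ((x + v i) + w j) := by
          congr 1; funext i; congr 1; funext j; congr 1; abel
      _ ≤ ∑ _i : Fin n, d * m := Finset.sum_le_sum fun i _ => hw (x + v i)
      _ = d * m * n := by simp [mul_comm]
  have hcast : (c + d) * ↑(n * m) = c * n * m + d * m * n := by push_cast; ring
  rw [hcast]
  exact add_le_add hf hg

lemma pfun_add_le {f g : G → ℝ} (hf : Bdd f) (hg : Bdd g) :
    pfun (f + g) ≤ pfun f + pfun g := by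
  have hbfg : BddBelow (meanSet (f + g)) := by
    obtain ⟨Cf, hCf⟩ := hf; obtain ⟨Cg, hCg⟩ := hg
    exact bddBelow_meanSet ⟨Cf + Cg, fun x =>
      (abs_add_le _ _).trans (add_le_add (hCf x) (hCg x))⟩
  have key : ∀ c ∈ meanSet f, ∀ d ∈ meanSet g, pfun (f + g) ≤ c + d :=
    fun c hc d hd => csInf_le hbfg (add_mem_meanSet hc hd)
  have h1 : ∀ d ∈ meanSet g, pfun (f + g) - d ≤ pfun f := fun d hd =>
    le_csInf (meanSet_nonempty hf) fun c hc => by linarith [key c hc d hd]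
  have h2 : pfun (f + g) - pfun f ≤ pfun g :=
    le_csInf (meanSet_nonempty hg) fun d hd => by linarith [h1 d hd]
  linarith

lemma pfun_smul {f : G → ℝ} (hf : Bdd f) {a : ℝ} (ha : 0 < a) :
    pfun (a • f) = a * pfun f := by
  have hset : meanSet (a • f) = a • meanSet f := by
    ext c
    constructor
    · rintro ⟨n, hn, v, hv⟩
      refine ⟨c / a, ⟨n, hn, v, fun x => ?_⟩, by show a * (c / a) = c; field_simp [ha.ne']⟩
      have := hv x
      simp only [Pi.smul_apply, smul_eq_mul, ← Finset.mul_sum] at this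
      rw [div_mul_eq_mul_div, le_div_iff₀ ha]
      linarith [this]
    · rintro ⟨c₀, ⟨n, hn, v, hv⟩, rfl⟩
      refine ⟨n, hn, v, fun x => ?_⟩
      simp only [Pi.smul_apply, smul_eq_mul, ← Finset.mul_sum, smul_eq_mul]
      calc a * ∑ i, f (x + v i) ≤ a * (c₀ * n) :=
            mul_le_mul_of_nonneg_left (hv x) ha.le
        _ = a * c₀ * n := by ring
  rw [pfun, hset, Real.sInf_smul_of_nonneg ha.le, smul_eq_mul, pfun]

lemma pfun_translate_sub_le {f : G → ℝ} {C : ℝ} (h : ∀ x, |f x| ≤ C) (g₀ : G) :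
    pfun (fun x => f (x + g₀) - f x) ≤ 0 := by
  set hfun : G → ℝ := fun x => f (x + g₀) - f x with hhfun
  have hbdd : Bdd hfun :=
    ⟨2 * C, fun x => by
      have := abs_sub (f (x + g₀)) (f x)
      calc |f (x + g₀) - f x| ≤ |f (x + g₀)| + |f x| := abs_sub _ _
        _ ≤ C + C := add_le_add (h _) (h _)
        _ = 2 * C := by ring⟩
  have hC0 : 0 ≤ C := le_trans (abs_nonneg _) (h 0)
  have key : ∀ n : ℕ, 0 < n → pfun hfun ≤ 2 * C / n := by
    intro n hn
    refine csInf_le (bddBelow_meanSet hbdd) ⟨n, hn, fun i => (i : ℕ) • g₀, fun x => ?_⟩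
    have hterm : ∀ i : ℕ, hfun (x + i • g₀) =
        f (x + (i + 1) • g₀) - f (x + i • g₀) := by
      intro i
      simp only [hhfun]
      congr 2
      rw [succ_nsmul]
      abel
    calc ∑ i : Fin n, hfun (x + (i : ℕ) • g₀)
        = ∑ i ∈ Finset.range n, hfun (x + i • g₀) :=
          Fin.sum_univ_eq_sum_range (fun i => hfun (x + i • g₀)) n
      _ = ∑ i ∈ Finset.range n, (f (x + (i + 1) • g₀) - f (x + i • g₀)) := by
          refine Finset.sum_congr rfl fun i _ => hterm i
      _ = f (x + n • g₀) - f (x + 0 • g₀) :=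
          Finset.sum_range_sub (fun i => f (x + i • g₀)) n
      _ ≤ 2 * C := by
          have h1 := le_of_abs_le (h (x + n • g₀))
          have h2 := neg_le_of_abs_le (h (x + 0 • g₀))
          linarith
      _ = 2 * C / n * n := by
          field_simp
  refine le_of_forall_pos_le_add fun ε hε => ?_
  obtain ⟨n, hn⟩ := exists_nat_gt (2 * C / ε)
  have hnpos : 0 < n := by
    have h0 : (0 : ℝ) ≤ 2 * C / ε := div_nonneg (by linarith) hε.le
    have : (0 : ℝ) < n := lt_of_le_of_lt h0 hn
    exact_mod_cast this
  have := key n hnpos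
  have hlt : 2 * C / n ≤ ε := by
    rw [div_le_iff₀ (by exact_mod_cast hnpos)]
    rw [div_lt_iff₀ hε] at hn
    nlinarith [hn]
  linarith

end Stmt9Aux

attribute [irreducible] Stmt9Aux.pfun

namespace Stmt9Aux2
open Stmt9Aux

variable (G : Type*) [AddCommGroup G]

/-- Bounded real functions on `G`, as a submodule of `G → ℝ`. -/
def Vsub : Submodule ℝ (G → ℝ) where
  carrier := {f | Bdd f}
  add_mem' := by
    rintro f g ⟨C, hC⟩ ⟨D, hD⟩
    exact ⟨C + D, fun x => (abs_add_le _ _).trans (add_le_add (hC x) (hD x))⟩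
  zero_mem' := ⟨0, fun x => by simp⟩
  smul_mem' := by
    rintro c f ⟨C, hC⟩
    refine ⟨|c| * C, fun x => ?_⟩
    simp only [Pi.smul_apply, smul_eq_mul, abs_mul]
    exact mul_le_mul_of_nonneg_left (hC x) (abs_nonneg c)


lemma exists_linear_le_sublinear {V : Type*} [AddCommGroup V] [Module ℝ V] (N : V → ℝ)
    (N_hom : ∀ c : ℝ, 0 < c → ∀ f : V, N (c • f) = c * N f)
    (N_add : ∀ f g : V, N (f + g) ≤ N f + N g)
    (N0 : 0 ≤ N 0) :
    ∃ gl : V →ₗ[ℝ] ℝ, ∀ f, gl f ≤ N f := by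
  have hzero : ∀ x : (⊥ : Submodule ℝ V), ((0 : (⊥ : Submodule ℝ V) →ₗ[ℝ] ℝ)) x ≤ N x := by
    rintro ⟨x, hx⟩
    rw [Submodule.mem_bot] at hx
    subst hx
    simpa using N0
  obtain ⟨gl, -, hgl⟩ := exists_extension_of_le_sublinear ⟨⊥, 0⟩ N N_hom N_add hzero
  exact ⟨gl, hgl⟩

set_option maxHeartbeats 1000000 in
theorem exists_invariant_mean :
    ∃ M : (G → ℝ) →ₗ[ℝ] ℝ,
      (∀ (f : G → ℝ) (C : ℝ), (∀ x, |f x| ≤ C) → |M f| ≤ C) ∧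
      (∀ (f : G → ℝ) (C : ℝ), (∀ x, |f x| ≤ C) →
        ∀ g₀ : G, M (fun x => f (x + g₀)) = M f) ∧
      (∀ c : ℝ, M (fun _ => c) = c) := by
  classical
  let V : Submodule ℝ (G → ℝ) := Vsub G
  let N : V → ℝ := fun f => pfun (f : G → ℝ)
  have N_hom : ∀ c : ℝ, 0 < c → ∀ f : V, N (c • f) = c * N f := by
    intro c hc f
    have : ((c • f : V) : G → ℝ) = c • (f : G → ℝ) := rfl
    simp only [N, this]
    exact pfun_smul f.2 hc
  have N_add : ∀ f g : V, N (f + g) ≤ N f + N g := fun f g => pfun_add_le f.2 g.2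
  have N0 : 0 ≤ N 0 :=
    pfun_nonneg_of (f := ((0 : V) : G → ℝ)) (fun x => le_refl 0) ((0 : V)).2
  obtain ⟨gl, hgl⟩ := exists_linear_le_sublinear N N_hom N_add N0
  -- extend to all of G → ℝ using a complement
  obtain ⟨W, hW⟩ := Submodule.exists_isCompl V
  set M : (G → ℝ) →ₗ[ℝ] ℝ := gl ∘ₗ (V.linearProjOfIsCompl W hW) with hM
  have heval : ∀ (f : G → ℝ) (hf : f ∈ V), M f = gl ⟨f, hf⟩ := by
    intro f hf
    have : (V.linearProjOfIsCompl W hW) f = ⟨f, hf⟩ := by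
      exact Submodule.linearProjOfIsCompl_apply_left hW ⟨f, hf⟩
    simp [hM, this]
  have hle : ∀ (f : G → ℝ) (hf : f ∈ V) (C : ℝ), (∀ x, f x ≤ C) → M f ≤ C := by
    intro f hf C h
    rw [heval f hf]
    exact (hgl ⟨f, hf⟩).trans (pfun_le hf h)
  refine ⟨M, ?_, ?_, ?_⟩
  · intro f C h
    have hf : f ∈ V := ⟨C, h⟩
    have h1 : M f ≤ C := hle f hf C fun x => le_of_abs_le (h x)
    have h2 : M (-f) ≤ C := hle (-f) (neg_mem hf) C fun x => by
      simp only [Pi.neg_apply]; linarith [(abs_le.1 (h x)).1]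
    rw [map_neg] at h2
    exact abs_le.2 ⟨by linarith, h1⟩
  · intro f C h g₀
    have hf : f ∈ V := ⟨C, h⟩
    have hfτ : (fun x => f (x + g₀)) ∈ V := ⟨C, fun x => h (x + g₀)⟩
    have key1 : M ((fun x => f (x + g₀)) - f) ≤ 0 := by
      have hmem : ((fun x => f (x + g₀)) - f) ∈ V := sub_mem hfτ hf
      have h1 := hle _ hmem
      have : M ((fun x => f (x + g₀)) - f) ≤ pfun (fun x => f (x + g₀) - f x) := by
        rw [heval _ hmem]
        exact (hgl ⟨_, hmem⟩).trans (le_of_eq (by congr))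
      exact this.trans (pfun_translate_sub_le h g₀)
    have key2 : M (f - (fun x => f (x + g₀))) ≤ 0 := by
      have hmem : (f - fun x => f (x + g₀)) ∈ V := sub_mem hf hfτ
      have hstep : M (f - fun x => f (x + g₀)) ≤ pfun (fun x => (-f) (x + g₀) - (-f) x) := by
        rw [heval _ hmem]
        refine (hgl ⟨_, hmem⟩).trans (le_of_eq ?_)
        show pfun ((f - fun x => f (x + g₀)) : G → ℝ) = _
        congr 1
        funext x
        show f x - f (x + g₀) = -f (x + g₀) - -f x
        ring
      exact hstep.trans (pfun_translate_sub_le (f := -f) (C := C)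
        (fun x => by simpa using h x) g₀)
    rw [map_sub] at key1 key2
    linarith
  · intro c
    have hone : (fun _ : G => (1:ℝ)) ∈ V := ⟨1, fun x => by norm_num⟩
    have h1 : M (fun _ : G => (1:ℝ)) ≤ 1 := hle _ hone 1 fun x => le_refl 1
    have h2 : M (-(fun _ : G => (1:ℝ))) ≤ -1 := by
      refine hle _ (neg_mem hone) (-1) fun x => ?_
      simp
    rw [map_neg] at h2
    have hMone : M (fun _ : G => (1:ℝ)) = 1 := le_antisymm h1 (by linarith)
    have : (fun _ : G => c) = c • (fun _ : G => (1:ℝ)) := by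
      funext x; simp
    rw [this, map_smul, hMone, smul_eq_mul, mul_one]

end Stmt9Aux2

section EMean

variable {E F : Type*} [NormedAddCommGroup E] [NormedSpace ℝ E]
  [NormedAddCommGroup F] [NormedSpace ℝ F]
variable (G : Type*) [AddCommGroup G]

theorem exists_invariant_meanE (e : E ≃ₗᵢ[ℝ] (F →L[ℝ] ℝ)) :
    ∃ M : (G → E) →ₗ[ℝ] E,
      (∀ (Φ : G → E) (C : ℝ), (∀ x, ‖Φ x‖ ≤ C) → ‖M Φ‖ ≤ C) ∧
      (∀ (Φ : G → E) (C : ℝ), (∀ x, ‖Φ x‖ ≤ C) →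
        ∀ g₀ : G, (M fun x => Φ (x + g₀)) = M Φ) ∧
      (∀ c : E, (M fun _ => c) = c) := by
  classical
  obtain ⟨m, hb, hinv, hconst⟩ := Stmt9Aux2.exists_invariant_mean G
  -- the scalarized mean, as a linear map into (not yet continuous) functionals
  set Lfun : (G → E) →ₗ[ℝ] (F →ₗ[ℝ] ℝ) :=
    { toFun := fun Φ =>
      { toFun := fun v => m (fun x => e (Φ x) v)
        map_add' := fun v w => by
          show m (fun x => e (Φ x) (v + w)) = m (fun x => e (Φ x) v) + m (fun x => e (Φ x) w)
          rw [← map_add]; congr 1; funext x; simp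
        map_smul' := fun c v => by
          show m (fun x => e (Φ x) (c • v)) = c • m (fun x => e (Φ x) v)
          rw [← map_smul]; congr 1; funext x; simp }
      map_add' := fun Φ Ψ => by
        refine LinearMap.ext fun v => ?_
        show m _ = m _ + m _
        rw [← map_add]; congr 1; funext x; simp
      map_smul' := fun c Φ => by
        refine LinearMap.ext fun v => ?_
        show m _ = c • m _
        rw [← map_smul]; congr 1; funext x; simp } with hLfun
  -- the submodule on which the scalarized mean is continuous
  set W : Submodule ℝ (G → E) :=
    { carrier := {Φ | Continuous (Lfun Φ)}
      add_mem' := by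
        intro Φ Ψ hΦ hΨ
        show Continuous (Lfun (Φ + Ψ))
        rw [map_add]
        show Continuous fun v => Lfun Φ v + Lfun Ψ v
        exact hΦ.add hΨ
      zero_mem' := by
        show Continuous (Lfun 0)
        rw [map_zero]
        show Continuous fun _ => (0 : ℝ)
        exact continuous_const
      smul_mem' := by
        intro c Φ hΦ
        show Continuous (Lfun (c • Φ))
        rw [map_smul]
        show Continuous fun v => c • Lfun Φ v
        exact hΦ.const_smul c } with hW
  have hWmem : ∀ {Φ : G → E}, Φ ∈ W ↔ Continuous (Lfun Φ) := fun {Φ} => Iff.rfl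
  set MW : W →ₗ[ℝ] E :=
    { toFun := fun Φ => e.symm ⟨Lfun (Φ : G → E), Φ.2⟩
      map_add' := fun Φ Ψ => by
        show e.symm ⟨Lfun ((Φ + Ψ : W) : G → E), (Φ + Ψ : W).2⟩ =
          e.symm ⟨Lfun (Φ : G → E), Φ.2⟩ + e.symm ⟨Lfun (Ψ : G → E), Ψ.2⟩
        rw [← map_add]
        congr 1
        refine ContinuousLinearMap.ext fun v => ?_
        show Lfun (((Φ : G → E)) + ((Ψ : G → E))) v
          = Lfun (Φ : G → E) v + Lfun (Ψ : G → E) v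
        rw [map_add]; rfl
      map_smul' := fun c Φ => by
        show e.symm ⟨Lfun ((c • Φ : W) : G → E), (c • Φ : W).2⟩ =
          c • e.symm ⟨Lfun (Φ : G → E), Φ.2⟩
        rw [← map_smul]
        congr 1
        refine ContinuousLinearMap.ext fun v => ?_
        show Lfun (c • (Φ : G → E)) v = c • Lfun (Φ : G → E) v
        rw [map_smul]; rfl } with hMW
  obtain ⟨W', hW'⟩ := Submodule.exists_isCompl W
  set M : (G → E) →ₗ[ℝ] E := MW ∘ₗ (W.linearProjOfIsCompl W' hW') with hM
  have heval : ∀ (Φ : G → E) (hΦ : Φ ∈ W), M Φ = e.symm ⟨Lfun Φ, hΦ⟩ := by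
    intro Φ hΦ
    have : (W.linearProjOfIsCompl W' hW') Φ = ⟨Φ, hΦ⟩ :=
      Submodule.linearProjOfIsCompl_apply_left hW' ⟨Φ, hΦ⟩
    simp only [hM, LinearMap.comp_apply, this]
    rfl
  have hbound : ∀ (Φ : G → E) (C : ℝ), (∀ x, ‖Φ x‖ ≤ C) →
      ∀ v : F, |Lfun Φ v| ≤ C * ‖v‖ := by
    intro Φ C hC v
    refine hb _ (C * ‖v‖) fun x => ?_
    calc |e (Φ x) v| ≤ ‖e (Φ x)‖ * ‖v‖ := (e (Φ x)).le_opNorm v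
      _ ≤ C * ‖v‖ := by
          have := e.norm_map (Φ x)
          exact mul_le_mul_of_nonneg_right (by rw [this]; exact hC x) (norm_nonneg v)
  have hmemW : ∀ (Φ : G → E) (C : ℝ), (∀ x, ‖Φ x‖ ≤ C) → Φ ∈ W := by
    intro Φ C hC
    refine hWmem.2 ?_
    refine AddMonoidHomClass.continuous_of_bound (Lfun Φ) C fun v => ?_
    rw [Real.norm_eq_abs]
    exact hbound Φ C hC v
  refine ⟨M, ?_, ?_, ?_⟩
  · intro Φ C hC
    have hΦW := hmemW Φ C hC
    have hC0 : 0 ≤ C := le_trans (norm_nonneg _) (hC 0)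
    rw [heval Φ hΦW, LinearIsometryEquiv.norm_map]
    exact ContinuousLinearMap.opNorm_le_bound _ hC0 fun v => by
      rw [Real.norm_eq_abs]; exact hbound Φ C hC v
  · intro Φ C hC g₀
    have hΦW := hmemW Φ C hC
    have hτW := hmemW (fun x => Φ (x + g₀)) C fun x => hC (x + g₀)
    rw [heval _ hτW, heval _ hΦW]
    congr 1
    refine ContinuousLinearMap.ext fun v => ?_
    show Lfun (fun x => Φ (x + g₀)) v = Lfun Φ v
    show m (fun x => e (Φ (x + g₀)) v) = m (fun x => e (Φ x) v)
    have hpt : ∀ x : G, |e (Φ x) v| ≤ C * ‖v‖ := by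
      intro x
      calc |e (Φ x) v| ≤ ‖e (Φ x)‖ * ‖v‖ := (e (Φ x)).le_opNorm v
        _ ≤ C * ‖v‖ := by
            have hnm := e.norm_map (Φ x)
            exact mul_le_mul_of_nonneg_right (by rw [hnm]; exact hC x) (norm_nonneg v)
    exact hinv (fun x => e (Φ x) v) (C * ‖v‖) hpt g₀
  · intro c
    have hcW := hmemW (fun _ => c) ‖c‖ fun _ => le_refl _
    rw [heval _ hcW]
    have hkey : (⟨Lfun (fun _ => c), hcW⟩ : F →L[ℝ] ℝ) = e c := by
      refine ContinuousLinearMap.ext fun v => ?_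
      show m (fun _ => e c v) = e c v
      exact hconst (e c v)
    rw [hkey, LinearIsometryEquiv.symm_apply_apply]

end EMean


/-- if `X, Y` are real normed spaces and `E` is a dual Banach space
(`E ≅ F*` isometrically for some Banach space `F`), then there is a norm-one linear
projection `P` from `BLip₀(X,Y;E)` onto `Blin(X,Y;E)`: `P` is linear, `P T` is bilinear
for every two-Lipschitz `T`, `P S = S` for bilinear `S`, and `‖P T‖ ≤ BLip(T)`
(expressed by `‖P T (x,y)‖ ≤ k‖x‖‖y‖` for any two-Lipschitz constant `k` of `T`).
In particular `Blin(X,Y;E)` is complemented in `BLip₀(X,Y;E)`. -/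
theorem stmt_9 {X Y E F : Type*} [NormedAddCommGroup X] [NormedSpace ℝ X]
    [NormedAddCommGroup Y] [NormedSpace ℝ Y] [NormedAddCommGroup E] [NormedSpace ℝ E]
    [NormedAddCommGroup F] [NormedSpace ℝ F] [CompleteSpace F]
    (e : E ≃ₗᵢ[ℝ] (F →L[ℝ] ℝ)) :
    ∃ P : (X → Y → E) →ₗ[ℝ] (X → Y → E),
      (∀ T : X → Y → E, MemBLip0 T → IsBilin (P T)) ∧
      (∀ (T : X → Y → E) (k : ℝ), 0 ≤ k → TwoLipWith k T → MemBLip0 T →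
        ∀ (x : X) (y : Y), ‖P T x y‖ ≤ k * ‖x‖ * ‖y‖) ∧
      (∀ T : X → Y → E, MemBLip0 T → IsBilin T → P T = T) := by
  classical
  obtain ⟨M, hMb, hMinv, hMc⟩ := exists_invariant_meanE (X × Y) e
  -- the "defect" function attached to T, x, y
  set Φm : (X → Y → E) →ₗ[ℝ] (X → Y → ((X × Y) → E)) :=
    { toFun := fun T x y p =>
        T (p.1 + x) (p.2 + y) - T (p.1 + x) p.2 - T p.1 (p.2 + y) + T p.1 p.2
      map_add' := fun T S => by
        funext x y p
        show (T + S) (p.1 + x) (p.2 + y) - (T + S) (p.1 + x) p.2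
            - (T + S) p.1 (p.2 + y) + (T + S) p.1 p.2
          = (T (p.1 + x) (p.2 + y) - T (p.1 + x) p.2 - T p.1 (p.2 + y) + T p.1 p.2)
            + (S (p.1 + x) (p.2 + y) - S (p.1 + x) p.2 - S p.1 (p.2 + y) + S p.1 p.2)
        simp only [Pi.add_apply]
        abel
      map_smul' := fun c T => by
        funext x y p
        show (c • T) (p.1 + x) (p.2 + y) - (c • T) (p.1 + x) p.2
            - (c • T) p.1 (p.2 + y) + (c • T) p.1 p.2
          = c • (T (p.1 + x) (p.2 + y) - T (p.1 + x) p.2 - T p.1 (p.2 + y) + T p.1 p.2)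
        simp only [Pi.smul_apply, smul_sub, smul_add] } with hΦm
  have hΦapp : ∀ (T : X → Y → E) (x : X) (y : Y) (p : X × Y),
      Φm T x y p = T (p.1 + x) (p.2 + y) - T (p.1 + x) p.2
        - T p.1 (p.2 + y) + T p.1 p.2 := fun _ _ _ _ => rfl
  set P : (X → Y → E) →ₗ[ℝ] (X → Y → E) :=
    { toFun := fun T x y => M (Φm T x y)
      map_add' := fun T S => by
        funext x y
        show M (Φm (T + S) x y) = M (Φm T x y) + M (Φm S x y)
        rw [map_add Φm T S]
        show M (Φm T x y + Φm S x y) = _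
        rw [map_add]
      map_smul' := fun c T => by
        funext x y
        show M (Φm (c • T) x y) = c • M (Φm T x y)
        rw [map_smul Φm c T]
        show M (c • Φm T x y) = _
        rw [map_smul] } with hP
  have hPapp : ∀ (T : X → Y → E) (x : X) (y : Y), P T x y = M (Φm T x y) :=
    fun _ _ _ => rfl
  -- pointwise bound for the defect function
  have hφb : ∀ (T : X → Y → E) (k : ℝ), TwoLipWith k T → ∀ (x : X) (y : Y) (p : X × Y),
      ‖Φm T x y p‖ ≤ k * ‖x‖ * ‖y‖ := by
    intro T k htl x y p
    have h1 := htl (p.1 + x) p.1 (p.2 + y) p.2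
    have h2 : Φm T x y p = T (p.1 + x) (p.2 + y) - T p.1 (p.2 + y)
        - T (p.1 + x) p.2 + T p.1 p.2 := by
      rw [hΦapp]; abel
    rw [h2]
    simpa [add_sub_cancel_left] using h1
  -- Lipschitz-type estimate for x ↦ P T x y
  have hlipx : ∀ (T : X → Y → E) (k : ℝ), TwoLipWith k T →
      ∀ (x x' : X) (y : Y), ‖P T x y - P T x' y‖ ≤ k * ‖x - x'‖ * ‖y‖ := by
    intro T k htl x x' y
    rw [hPapp, hPapp, ← map_sub]
    refine hMb _ _ fun p => ?_
    have h1 := htl (p.1 + x) (p.1 + x') (p.2 + y) p.2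
    have h2 : (Φm T x y - Φm T x' y) p = T (p.1 + x) (p.2 + y) - T (p.1 + x') (p.2 + y)
        - T (p.1 + x) p.2 + T (p.1 + x') p.2 := by
      show Φm T x y p - Φm T x' y p = _
      rw [hΦapp, hΦapp]; abel
    rw [h2]
    simpa [add_sub_add_left_eq_sub, add_sub_cancel_right] using h1
  have hlipy : ∀ (T : X → Y → E) (k : ℝ), TwoLipWith k T →
      ∀ (x : X) (y y' : Y), ‖P T x y - P T x y'‖ ≤ k * ‖x‖ * ‖y - y'‖ := by
    intro T k htl x y y'
    rw [hPapp, hPapp, ← map_sub]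
    refine hMb _ _ fun p => ?_
    have h1 := htl (p.1 + x) p.1 (p.2 + y) (p.2 + y')
    have h2 : (Φm T x y - Φm T x y') p = T (p.1 + x) (p.2 + y) - T p.1 (p.2 + y)
        - T (p.1 + x) (p.2 + y') + T p.1 (p.2 + y') := by
      show Φm T x y p - Φm T x y' p = _
      rw [hΦapp, hΦapp]; abel
    rw [h2]
    simpa [add_sub_add_left_eq_sub, add_sub_cancel_left] using h1
  -- additivity in x
  have haddx : ∀ (T : X → Y → E), MemBLip0 T →
      ∀ (x x' : X) (y : Y), P T (x + x') y = P T x y + P T x' y := by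
    rintro T ⟨⟨k, hk0, htl⟩, -, -⟩ x x' y
    have hid : Φm T (x + x') y
        = (fun p => Φm T x y (p + (x', 0))) + Φm T x' y := by
      funext p
      show Φm T (x + x') y p = Φm T x y (p + (x', 0)) + Φm T x' y p
      rw [hΦapp, hΦapp, hΦapp]
      simp only [Prod.fst_add, Prod.snd_add, add_zero]
      have e1 : p.1 + x' + x = p.1 + (x + x') := by abel
      rw [e1]
      abel
    rw [hPapp, hPapp, hPapp, hid, map_add,
      hMinv (Φm T x y) (k * ‖x‖ * ‖y‖) (hφb T k htl x y) (x', 0)]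
  have haddy : ∀ (T : X → Y → E), MemBLip0 T →
      ∀ (x : X) (y y' : Y), P T x (y + y') = P T x y + P T x y' := by
    rintro T ⟨⟨k, hk0, htl⟩, -, -⟩ x y y'
    have hid : Φm T x (y + y')
        = (fun p => Φm T x y (p + (0, y'))) + Φm T x y' := by
      funext p
      show Φm T x (y + y') p = Φm T x y (p + (0, y')) + Φm T x y' p
      rw [hΦapp, hΦapp, hΦapp]
      simp only [Prod.fst_add, Prod.snd_add, add_zero]
      have e1 : p.2 + y' + y = p.2 + (y + y') := by abel
      rw [e1]
      abel
    rw [hPapp, hPapp, hPapp, hid, map_add,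
      hMinv (Φm T x y) (k * ‖x‖ * ‖y‖) (hφb T k htl x y) (0, y')]
  refine ⟨P, ?_, ?_, ?_⟩
  · -- bilinearity of P T
    intro T hT
    obtain ⟨⟨k, hk0, htl⟩, -, -⟩ := id hT
    refine ⟨fun x x' y => haddx T hT x x' y, ?_, fun x y y' => haddy T hT x y y', ?_⟩
    · -- homogeneity in x
      intro c x y
      set A : X →+ E := AddMonoidHom.mk' (fun x => P T x y)
        (fun x x' => haddx T hT x x' y) with hA
      have hAcont : Continuous A := by
        refine (LipschitzWith.of_dist_le_mul (K := ⟨max (k * ‖y‖) 0, le_max_right _ _⟩)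
          fun x x' => ?_).continuous
        rw [dist_eq_norm, dist_eq_norm]
        show ‖P T x y - P T x' y‖ ≤ max (k * ‖y‖) 0 * ‖x - x'‖
        calc ‖P T x y - P T x' y‖ ≤ k * ‖x - x'‖ * ‖y‖ := hlipx T k htl x x' y
          _ = (k * ‖y‖) * ‖x - x'‖ := by ring
          _ ≤ max (k * ‖y‖) 0 * ‖x - x'‖ :=
              mul_le_mul_of_nonneg_right (le_max_left _ _) (norm_nonneg _)
      have h3 := map_smul (A.toRealLinearMap hAcont) c x
      rw [AddMonoidHom.coe_toRealLinearMap] at h3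
      exact h3
    · -- homogeneity in y
      intro c x y
      set A : Y →+ E := AddMonoidHom.mk' (fun y => P T x y)
        (fun y y' => haddy T hT x y y') with hA
      have hAcont : Continuous A := by
        refine (LipschitzWith.of_dist_le_mul (K := ⟨max (k * ‖x‖) 0, le_max_right _ _⟩)
          fun y y' => ?_).continuous
        rw [dist_eq_norm, dist_eq_norm]
        show ‖P T x y - P T x y'‖ ≤ max (k * ‖x‖) 0 * ‖y - y'‖
        calc ‖P T x y - P T x y'‖ ≤ k * ‖x‖ * ‖y - y'‖ := hlipy T k htl x y y'
          _ = (k * ‖x‖) * ‖y - y'‖ := by ring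
          _ ≤ max (k * ‖x‖) 0 * ‖y - y'‖ :=
              mul_le_mul_of_nonneg_right (le_max_left _ _) (norm_nonneg _)
      have h3 := map_smul (A.toRealLinearMap hAcont) c y
      rw [AddMonoidHom.coe_toRealLinearMap] at h3
      exact h3
  · -- norm bound
    intro T k hk0 htl hT x y
    rw [hPapp]
    exact hMb _ _ (hφb T k htl x y)
  · -- P fixes bilinear maps
    intro T hT hbil
    obtain ⟨hadd1, -, hadd2, -⟩ := hbil
    funext x y
    have hconst : Φm T x y = fun _ => T x y := by
      funext p
      rw [hΦapp]
      have e1 : T (p.1 + x) (p.2 + y) = T p.1 (p.2 + y) + T x p.2 + T x y := by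
        rw [hadd1, hadd2 x p.2 y]
        abel
      have e2 : T (p.1 + x) p.2 = T p.1 p.2 + T x p.2 := hadd1 p.1 x p.2
      rw [e1, e2]
      abel
    rw [hPapp, hconst, hMc (T x y)]
end

section
/- Let D be a subspace of F(X) ⊗̂_π F(Y) and let E be an injective Banach space (every bounded linear operator into E from a subspace of a Banach space extends to the whole space with the same norm). Then the quotient BLip₀(X,Y;E)/◇D is isometrically isomorphic to L(D, E), via the map sending T + ◇D to the restriction of T_L to D. -/
set_option synthInstance.maxHeartbeats 800000
set_option maxHeartbeats 1600000


/-- The pre-annihilator `◇D = {T : T_L vanishes on D}`, where `J : T ↦ T_L`. -/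
def preAnn {B Z E : Type} [NormedAddCommGroup B] [NormedSpace ℝ B]
    [NormedAddCommGroup Z] [NormedSpace ℝ Z] [NormedAddCommGroup E] [NormedSpace ℝ E]
    (J : B ≃ₗᵢ[ℝ] (Z →L[ℝ] E)) (D : Submodule ℝ Z) : Submodule ℝ B where
  carrier := {T | ∀ ξ ∈ D, J T ξ = 0}
  zero_mem' := by intro ξ _; simp
  add_mem' := by
    intro a b ha hb ξ hξ
    simp [map_add, ContinuousLinearMap.add_apply, ha ξ hξ, hb ξ hξ]
  smul_mem' := by
    intro c a ha ξ hξ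
    simp [map_smul, ContinuousLinearMap.smul_apply, ha ξ hξ]

/-- here `B` stands for the Banach space `BLip₀(X,Y;E)`, `Z` for
`F(X) ⊗̂_π F(Y)`, and `J : B ≃ₗᵢ L(Z,E)` for the isometric isomorphism `T ↦ T_L`.
If `D` is a subspace of `Z` and `E` is an injective Banach space (hypothesis `hinj`:
operators into `E` extend from subspaces with equal norm), then the quotient
`BLip₀(X,Y;E)/◇D` is isometrically isomorphic to `L(D,E)` via
`T + ◇D ↦ T_L|_D`. -/
theorem stmt_15 {B Z E : Type} [NormedAddCommGroup B] [NormedSpace ℝ B] [CompleteSpace B]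
    [NormedAddCommGroup Z] [NormedSpace ℝ Z] [CompleteSpace Z]
    [NormedAddCommGroup E] [NormedSpace ℝ E] [CompleteSpace E]
    (hinj : ∀ (W : Type) [NormedAddCommGroup W] [NormedSpace ℝ W] [CompleteSpace W],
      ∀ (V : Submodule ℝ W) (S : V →L[ℝ] E),
        ∃ S' : W →L[ℝ] E, ‖S'‖ = ‖S‖ ∧ ∀ v : V, S' (v : W) = S v)
    (J : B ≃ₗᵢ[ℝ] (Z →L[ℝ] E)) (D : Submodule ℝ Z) :
    ∃ e : (B ⧸ preAnn J D) ≃ₗᵢ[ℝ] (D →L[ℝ] E),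
      ∀ (T : B) (ξ : D), e (Submodule.Quotient.mk T) ξ = J T (ξ : Z) := by
  classical
  set φ : B →ₗ[ℝ] (D →L[ℝ] E) :=
    { toFun := fun T => (J T).comp D.subtypeL
      map_add' := by intro a b; ext ξ; simp
      map_smul' := by intro c a; ext ξ; simp } with hφ
  have hφ_apply : ∀ (T : B) (ξ : D), φ T ξ = J T (ξ : Z) := fun T ξ => rfl
  have hker : preAnn J D = LinearMap.ker φ := by
    ext T
    simp only [LinearMap.mem_ker]
    constructor
    · intro h
      ext ξ
      simpa [hφ_apply] using h ξ ξ.2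
    · intro h ξ hξ
      have := congrArg (fun (g : D →L[ℝ] E) => g ⟨ξ, hξ⟩) h
      simpa [hφ_apply] using this
  have hle : preAnn J D ≤ LinearMap.ker φ := hker.le
  set f : (B ⧸ preAnn J D) →ₗ[ℝ] (D →L[ℝ] E) := (preAnn J D).liftQ φ hle with hf
  have hf_mk : ∀ T : B, f (Submodule.Quotient.mk T) = φ T := fun T => rfl
  have hφ_norm : ∀ T : B, ‖φ T‖ ≤ ‖T‖ := by
    intro T
    refine ContinuousLinearMap.opNorm_le_bound _ (norm_nonneg T) ?_
    intro ξ
    have h1 : ‖J T (ξ : Z)‖ ≤ ‖J T‖ * ‖(ξ : Z)‖ := (J T).le_opNorm _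
    simpa [hφ_apply, J.norm_map] using h1
  -- surjectivity data: for S : D →L E, produce T with f (mk T) = S and ‖T‖ = ‖S‖
  have hsurj : ∀ S : D →L[ℝ] E, ∃ T : B, φ T = S ∧ ‖T‖ = ‖S‖ := by
    intro S
    obtain ⟨S', hS'norm, hS'eq⟩ := hinj Z D S
    refine ⟨J.symm S', ?_, by simp [J.symm.norm_map, hS'norm]⟩
    ext ξ
    simp [hφ_apply, hS'eq ξ]
  have hbij : Function.Bijective f := by
    constructor
    · rw [← LinearMap.ker_eq_bot]
      exact Submodule.ker_liftQ_eq_bot _ _ _ hker.ge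
    · intro S
      obtain ⟨T, hT, -⟩ := hsurj S
      exact ⟨Submodule.Quotient.mk T, hT⟩
  have hnorm : ∀ q : B ⧸ preAnn J D, ‖f q‖ = ‖q‖ := by
    intro q
    refine le_antisymm ?_ ?_
    · refine le_of_forall_pos_le_add ?_
      intro ε hε
      obtain ⟨T, hTq, hTn⟩ := Submodule.Quotient.norm_mk_lt q hε
      calc ‖f q‖ = ‖φ T‖ := by rw [← hTq, hf_mk]
        _ ≤ ‖T‖ := hφ_norm T
        _ ≤ ‖q‖ + ε := hTn.le
    · obtain ⟨T₀, hT₀⟩ := Submodule.Quotient.mk_surjective _ q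
      obtain ⟨T, hT, hTn⟩ := hsurj (φ T₀)
      have hmem : T₀ - T ∈ preAnn J D := by
        rw [hker, LinearMap.mem_ker, map_sub, hT, sub_self]
      have hmk : Submodule.Quotient.mk T = q := by
        rw [← hT₀]
        exact (Submodule.Quotient.eq _).2 (by simpa using neg_mem hmem)
      calc ‖q‖ = ‖Submodule.Quotient.mk (p := preAnn J D) T‖ := by rw [hmk]
        _ ≤ ‖T‖ := Submodule.Quotient.norm_mk_le _ _
        _ = ‖φ T₀‖ := hTn
        _ = ‖f q‖ := by rw [← hT₀, hf_mk]
  refine ⟨{ toLinearEquiv := LinearEquiv.ofBijective f hbij,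
            norm_map' := fun q => hnorm q }, ?_⟩
  intro T ξ
  rfl
end

section
/- A two-Lipschitz operator T ∈ BLip₀(X,Y;E) is bilinear if and only if its linearization T_L vanishes on the subspace ker(β_X) ⊗̂_π F(Y) + F(X) ⊗̂_π ker(β_Y) of F(X) ⊗̂_π F(Y), where β_X : F(X) → X is the canonical barycenter/linearization map (the linear contraction with β_X(δ_x) = x). -/
/-- a two-Lipschitz operator `T ∈ BLip₀(X,Y;E)` is bilinear if and only if
its linearization `T_L` vanishes on the subspace
`ker(β_X) ⊗̂_π F(Y) + F(X) ⊗̂_π ker(β_Y)` of `F(X) ⊗̂_π F(Y)`.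
Here `FX, FY` stand for the Lipschitz-free spaces `F(X), F(Y)` (Banach spaces with
evaluation maps `δX, δY` of dense linear span and `‖δ x‖ = ‖x‖`), `βX, βY` are the
barycenter maps (`βX (δX x) = x`), `Z` stands for `F(X) ⊗̂_π F(Y)` with canonical
continuous bilinear map `tensor` (`‖μ ⊗ ν‖_π ≤ ‖μ‖‖ν‖`), and `TL` is the linearization
of `T`, i.e. `T x y = TL (δ_x ⊗ δ_y)`. Vanishing of the continuous map `TL` on the stated
subspace is expressed by vanishing on its generating elementary tensors `μ ⊗ ν` with
`μ ∈ ker βX` or `ν ∈ ker βY`. -/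
theorem stmt_17 {X Y E FX FY Z : Type*}
    [NormedAddCommGroup X] [NormedSpace ℝ X] [CompleteSpace X]
    [NormedAddCommGroup Y] [NormedSpace ℝ Y] [CompleteSpace Y]
    [NormedAddCommGroup E] [NormedSpace ℝ E] [CompleteSpace E]
    [NormedAddCommGroup FX] [NormedSpace ℝ FX] [CompleteSpace FX]
    [NormedAddCommGroup FY] [NormedSpace ℝ FY] [CompleteSpace FY]
    [NormedAddCommGroup Z] [NormedSpace ℝ Z] [CompleteSpace Z]
    (δX : X → FX) (hδX : ∀ x : X, ‖δX x‖ = ‖x‖)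
    (hdX : Dense ((Submodule.span ℝ (Set.range δX) : Submodule ℝ FX) : Set FX))
    (δY : Y → FY) (hδY : ∀ y : Y, ‖δY y‖ = ‖y‖)
    (hdY : Dense ((Submodule.span ℝ (Set.range δY) : Submodule ℝ FY) : Set FY))
    (βX : FX →L[ℝ] X) (hβX : ∀ x : X, βX (δX x) = x)
    (βY : FY →L[ℝ] Y) (hβY : ∀ y : Y, βY (δY y) = y)
    (tensor : FX →L[ℝ] FY →L[ℝ] Z)
    (hten : ∀ (μ : FX) (ν : FY), ‖tensor μ ν‖ ≤ ‖μ‖ * ‖ν‖)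
    (hdZ : Dense ((Submodule.span ℝ
      {ζ : Z | ∃ (μ : FX) (ν : FY), ζ = tensor μ ν} : Submodule ℝ Z) : Set Z))
    (T : X → Y → E) (k : ℝ)
    (hTk : ∀ (x x' : X) (y y' : Y),
      ‖T x y - T x' y - T x y' + T x' y'‖ ≤ k * ‖x - x'‖ * ‖y - y'‖)
    (hT1 : ∀ x : X, T x 0 = 0) (hT2 : ∀ y : Y, T 0 y = 0)
    (TL : Z →L[ℝ] E) (hTL : ∀ (x : X) (y : Y), T x y = TL (tensor (δX x) (δY y))) :
    ((∀ (x x' : X) (y : Y), T (x + x') y = T x y + T x' y) ∧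
     (∀ (c : ℝ) (x : X) (y : Y), T (c • x) y = c • T x y) ∧
     (∀ (x : X) (y y' : Y), T x (y + y') = T x y + T x y') ∧
     (∀ (c : ℝ) (x : X) (y : Y), T x (c • y) = c • T x y))
    ↔ ((∀ (μ : FX) (ν : FY), βX μ = 0 → TL (tensor μ ν) = 0) ∧
       (∀ (μ : FX) (ν : FY), βY ν = 0 → TL (tensor μ ν) = 0)) := by
  constructor
  · rintro ⟨ha1, hs1, ha2, hs2⟩
    have hbound : ∀ x y, ‖T x y‖ ≤ k * ‖x‖ * ‖y‖ := by
      intro x y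
      simpa [hT1, hT2] using hTk x 0 y 0
    -- Step 1: for each x, TL (tensor (δX x) ν) = T x (βY ν)
    have step1 : ∀ (x : X) (ν : FY), TL (tensor (δX x) ν) = T x (βY ν) := by
      intro x
      let f : Y →ₗ[ℝ] E :=
        { toFun := T x, map_add' := ha2 x, map_smul' := fun c y => hs2 c x y }
      let fc : Y →L[ℝ] E := f.mkContinuous (k * ‖x‖)
        (fun y => by
          calc ‖T x y‖ ≤ k * ‖x‖ * ‖y‖ := hbound x y
            _ = k * ‖x‖ * ‖y‖ := rfl)
      let g : FY →L[ℝ] E := (TL.comp (tensor (δX x))) - (fc.comp βY)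
      have hker : (Submodule.span ℝ (Set.range δY) : Set FY) ⊆ {ν : FY | g ν = 0} := by
        have hle : Submodule.span ℝ (Set.range δY) ≤ LinearMap.ker (g : FY →ₗ[ℝ] E) := by
          rw [Submodule.span_le]
          rintro _ ⟨y, rfl⟩
          simp only [SetLike.mem_coe, LinearMap.mem_ker, ContinuousLinearMap.coe_coe]
          show TL (tensor (δX x) (δY y)) - fc (βY (δY y)) = 0
          rw [hβY]
          show TL (tensor (δX x) (δY y)) - T x y = 0
          rw [← hTL, sub_self]
        intro ν hν
        exact hle hν
      have hclosed : IsClosed {ν : FY | g ν = 0} :=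
        isClosed_eq g.continuous continuous_const
      intro ν
      have hmem : ν ∈ closure ((Submodule.span ℝ (Set.range δY) : Submodule ℝ FY) : Set FY) := by
        rw [hdY.closure_eq]; trivial
      have : g ν = 0 := hclosed.closure_subset_iff.mpr hker hmem
      have h0 : TL ((tensor (δX x)) ν) - fc (βY ν) = 0 := this
      exact sub_eq_zero.mp h0
    -- Step 2: for every μ ν, TL (tensor μ ν) = T (βX μ) (βY ν)
    have step2 : ∀ (μ : FX) (ν : FY), TL (tensor μ ν) = T (βX μ) (βY ν) := by
      intro μ ν
      let f : X →ₗ[ℝ] E :=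
        { toFun := fun x => T x (βY ν), map_add' := fun a b => ha1 a b (βY ν),
          map_smul' := fun c a => hs1 c a (βY ν) }
      let fc : X →L[ℝ] E := f.mkContinuous (k * ‖βY ν‖)
        (fun x => by
          calc ‖T x (βY ν)‖ ≤ k * ‖x‖ * ‖βY ν‖ := hbound x (βY ν)
            _ = k * ‖βY ν‖ * ‖x‖ := by ring)
      let g : FX →L[ℝ] E := (TL.comp (tensor.flip ν)) - (fc.comp βX)
      have hker : (Submodule.span ℝ (Set.range δX) : Set FX) ⊆ {μ : FX | g μ = 0} := by
        have hle : Submodule.span ℝ (Set.range δX) ≤ LinearMap.ker (g : FX →ₗ[ℝ] E) := by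
          rw [Submodule.span_le]
          rintro _ ⟨x, rfl⟩
          simp only [SetLike.mem_coe, LinearMap.mem_ker, ContinuousLinearMap.coe_coe]
          show TL (tensor.flip ν (δX x)) - fc (βX (δX x)) = 0
          rw [hβX]
          show TL (tensor (δX x) ν) - T x (βY ν) = 0
          rw [step1 x ν, sub_self]
        intro μ' hμ'
        exact hle hμ'
      have hclosed : IsClosed {μ : FX | g μ = 0} :=
        isClosed_eq g.continuous continuous_const
      have hmem : μ ∈ closure ((Submodule.span ℝ (Set.range δX) : Submodule ℝ FX) : Set FX) := by
        rw [hdX.closure_eq]; trivial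
      have h0 : g μ = 0 := hclosed.closure_subset_iff.mpr hker hmem
      have : TL (tensor.flip ν μ) - fc (βX μ) = 0 := h0
      have h' : TL (tensor μ ν) = T (βX μ) (βY ν) := by
        have := sub_eq_zero.mp this
        exact (by simpa using this : TL (tensor μ ν) = fc (βX μ))
      exact h'
    constructor
    · intro μ ν hμ
      rw [step2, hμ, hT2]
    · intro μ ν hν
      rw [step2, hν, hT1]
  · rintro ⟨h1, h2⟩
    refine ⟨?_, ?_, ?_, ?_⟩
    · intro x x' y
      have hμ : βX (δX (x + x') - δX x - δX x') = 0 := by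
        simp [hβX, map_sub]
      have h0 := h1 _ (δY y) hμ
      have hsplit : tensor (δX (x + x')) (δY y)
          = tensor (δX (x + x') - δX x - δX x') (δY y)
            + tensor (δX x) (δY y) + tensor (δX x') (δY y) := by
        simp only [map_sub, ContinuousLinearMap.sub_apply]
        abel
      rw [hTL (x + x') y, hTL x y, hTL x' y, hsplit, map_add, map_add, h0, zero_add]
    · intro c x y
      have hμ : βX (δX (c • x) - c • δX x) = 0 := by
        simp [hβX, map_sub, map_smul]
      have h0 := h1 _ (δY y) hμ
      have hsplit : tensor (δX (c • x)) (δY y)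
          = tensor (δX (c • x) - c • δX x) (δY y) + c • tensor (δX x) (δY y) := by
        simp only [map_sub, map_smul, ContinuousLinearMap.sub_apply,
          ContinuousLinearMap.smul_apply]
        abel
      rw [hTL (c • x) y, hTL x y, hsplit, map_add, map_smul, h0, zero_add]
    · intro x y y'
      have hν : βY (δY (y + y') - δY y - δY y') = 0 := by
        simp [hβY, map_sub]
      have h0 := h2 (δX x) _ hν
      have hsplit : tensor (δX x) (δY (y + y'))
          = tensor (δX x) (δY (y + y') - δY y - δY y')
            + tensor (δX x) (δY y) + tensor (δX x) (δY y') := by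
        simp only [map_sub]
        abel
      rw [hTL x (y + y'), hTL x y, hTL x y', hsplit, map_add, map_add, h0, zero_add]
    · intro c x y
      have hν : βY (δY (c • y) - c • δY y) = 0 := by
        simp [hβY, map_sub, map_smul]
      have h0 := h2 (δX x) _ hν
      have hsplit : tensor (δX x) (δY (c • y))
          = tensor (δX x) (δY (c • y) - c • δY y) + c • tensor (δX x) (δY y) := by
        simp only [map_sub, map_smul]
        abel
      rw [hTL x (c • y), hTL x y, hsplit, map_add, map_smul, h0, zero_add]
end
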